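/- arXiv:0906.5233 — 3 statements merged into one kernel-verified Lean document; each statement's English description precedes it below -/
import Mathlib

section
/- Let G = ⟨N, T, P, S⟩ be an ε-free context-free grammar in Greibach form with productions enumerated p₁, …, p_m, and let s = s₁s₂⋯sₙ be a string over T of length n. Define the grammar G′ = ⟨N, T′, P′, S⟩ over the terminal alphabet T′ = T × {1,…,m}, where for every index j, if the j-th production of P is A → aα then P′ contains the production A → (a, j)α. For each i ∈ {1,…,n} define Dᵢ = {(a, j) ∈ T′ : a = sᵢ}. Then L(G′) ∩ L(R_{D₁,…,Dₙ}) ≠ ∅ if and only if s ∈ L(G). -/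
instance {T N : Type} [DecidableEq T] [DecidableEq N] :
    DecidableEq (ContextFreeRule T N) := fun r₁ r₂ =>
  decidable_of_iff (r₁.input = r₂.input ∧ r₁.output = r₂.output)
    (by cases r₁; cases r₂; simp)

/-- The Cartesian product language `L(R_{D₁,…,Dₙ})`: the set of strings `a₁a₂⋯aₙ`
with `aᵢ ∈ Dᵢ` for every `i`. -/
def cartesianLanguage {T : Type} (n : ℕ) (D : Fin n → Set T) : Language T :=
  { w | ∃ a : Fin n → T, (∀ i, a i ∈ D i) ∧ w = List.ofFn a }

/-- An ε-free context-free grammar in Greibach form with nonterminals `N`, start symbol `S`,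
and productions enumerated `p₁, …, p_m`, where the `j`-th production is
`lhs j → (term j) (rest j)` (a terminal followed by a list of nonterminals). -/
def greibachGrammar {T N : Type} [DecidableEq T] [DecidableEq N] (S : N) (m : ℕ)
    (lhs : Fin m → N) (term : Fin m → T) (rest : Fin m → List N) : ContextFreeGrammar T :=
  ⟨N, S, Finset.univ.image fun j : Fin m =>
    ⟨lhs j, Symbol.terminal (term j) :: (rest j).map Symbol.nonterminal⟩⟩

/-- The grammar `G′` over the terminal alphabet `T′ = T × {1,…,m}` obtained by replacing the
`j`-th production `A → aα` of `G` by `A → (a, j)α`. -/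
def annotatedGrammar {T N : Type} [DecidableEq T] [DecidableEq N] (S : N) (m : ℕ)
    (lhs : Fin m → N) (term : Fin m → T) (rest : Fin m → List N) :
    ContextFreeGrammar (T × Fin m) :=
  ⟨N, S, Finset.univ.image fun j : Fin m =>
    ⟨lhs j, Symbol.terminal (term j, j) :: (rest j).map Symbol.nonterminal⟩⟩

/-- Projection of annotated symbols to plain symbols. -/
def projSym {T N : Type} {m : ℕ} : Symbol (T × Fin m) N → Symbol T N
  | .terminal x => .terminal x.1
  | .nonterminal A => .nonterminal A

lemma projSym_output {T N : Type} {m : ℕ} (a : T) (j : Fin m) (l : List N) :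
    List.map (projSym (T := T) (N := N) (m := m))
        (Symbol.terminal (a, j) :: l.map Symbol.nonterminal) =
      Symbol.terminal a :: l.map Symbol.nonterminal := by
  simp [projSym, List.map_map, Function.comp]

section

variable {T N : Type} [DecidableEq T] [DecidableEq N] {S : N} {m : ℕ}
  {lhs : Fin m → N} {term : Fin m → T} {rest : Fin m → List N}

lemma derives_proj {u v : List (Symbol (T × Fin m) N)}
    (h : (annotatedGrammar S m lhs term rest).Derives u v) :
    (greibachGrammar S m lhs term rest).Derives (u.map projSym) (v.map projSym) := by
  induction h with
  | refl => rfl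
  | tail _ hp ih =>
    refine ih.trans_produces ?_
    obtain ⟨r, hr, hrw⟩ := hp
    change r ∈ Finset.univ.image (fun j : Fin m => (⟨lhs j, Symbol.terminal (term j, j) :: (rest j).map Symbol.nonterminal⟩ : ContextFreeRule (T × Fin m) N)) at hr
    obtain ⟨j, -, rfl⟩ := (Finset.mem_image (f := (fun j : Fin m => (⟨lhs j, Symbol.terminal (term j, j) :: (rest j).map Symbol.nonterminal⟩ : ContextFreeRule (T × Fin m) N)))).mp hr
    obtain ⟨p, q, rfl, rfl⟩ := hrw.exists_parts
    change List (Symbol (T × Fin m) N) at p q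
    refine ⟨⟨lhs j, Symbol.terminal (term j) :: (rest j).map Symbol.nonterminal⟩, ?_, ?_⟩
    · change _ ∈ Finset.univ.image (fun j : Fin m => (⟨lhs j, Symbol.terminal (term j) :: (rest j).map Symbol.nonterminal⟩ : ContextFreeRule T N))
      simp only [greibachGrammar, Finset.mem_image, Finset.mem_univ, true_and]
      exact ⟨j, rfl⟩
    · rw [ContextFreeRule.rewrites_iff]
      refine ⟨p.map projSym, q.map projSym, ?_, ?_⟩
      · show List.map (projSym (T := T) (N := N) (m := m))
            (List.append (α := Symbol (T × Fin m) N) (List.append p [Symbol.nonterminal (lhs j)]) q) =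
          List.append (α := Symbol T N) (List.append (List.map projSym p) [Symbol.nonterminal (lhs j)])
            (List.map projSym q)
        simp [projSym, List.map_map, Function.comp_def]
      · show List.map (projSym (T := T) (N := N) (m := m))
            (List.append (α := Symbol (T × Fin m) N)
              (List.append p (Symbol.terminal (term j, j) :: (rest j).map Symbol.nonterminal)) q) =
          List.append (α := Symbol T N)
            (List.append (List.map projSym p) (Symbol.terminal (term j) :: (rest j).map Symbol.nonterminal))
            (List.map projSym q)
        simp [projSym, List.map_map, Function.comp_def]

lemma derives_lift {u v : List (Symbol T N)}
    (h : (greibachGrammar S m lhs term rest).Derives u v) :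
    ∀ u' : List (Symbol (T × Fin m) N), u'.map projSym = u →
      ∃ v', (annotatedGrammar S m lhs term rest).Derives u' v' ∧ v'.map projSym = v := by
  induction h using Relation.ReflTransGen.head_induction_on with
  | refl => exact fun u' hu' => ⟨u', Relation.ReflTransGen.refl, hu'⟩
  | head hp _ ih =>
    intro u' hu'
    obtain ⟨r, hr, hrw⟩ := hp
    change r ∈ Finset.univ.image (fun j : Fin m => (⟨lhs j, Symbol.terminal (term j) :: (rest j).map Symbol.nonterminal⟩ : ContextFreeRule T N)) at hr
    obtain ⟨j, -, rfl⟩ := (Finset.mem_image (f := (fun j : Fin m => (⟨lhs j, Symbol.terminal (term j) :: (rest j).map Symbol.nonterminal⟩ : ContextFreeRule T N)))).mp hr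
    obtain ⟨p, q, huv, rfl⟩ := hrw.exists_parts
    change List (Symbol T N) at p q
    rw [huv] at hu'
    obtain ⟨u₁, u₂, hu'eq, hu₁, hu₂⟩ := List.map_eq_append_iff.mp hu'
    obtain ⟨p₁, x₁, hu₁eq, hp₁, hx₁⟩ := List.map_eq_append_iff.mp hu₁
    have hx₁eq : x₁ = [Symbol.nonterminal (lhs j)] := by
      cases x₁ with
      | nil => simp at hx₁
      | cons y ys =>
        simp only [List.map_cons] at hx₁
        obtain ⟨h1, h2⟩ := List.cons.injEq _ _ _ _ ▸ hx₁
        have hys : ys = [] := List.map_eq_nil_iff.mp h2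
        cases y with
        | terminal t => simp [projSym] at h1
        | nonterminal A =>
          have : A = lhs j := by simp only [projSym] at h1; exact Symbol.nonterminal.inj h1
          simp [hys, this]
    subst hx₁eq hu₁eq hu'eq
    have hmid : (annotatedGrammar S m lhs term rest).Produces
        (p₁ ++ [Symbol.nonterminal (lhs j)] ++ u₂)
        (p₁ ++ (Symbol.terminal (term j, j) :: (rest j).map Symbol.nonterminal) ++ u₂) := by
      refine ⟨⟨lhs j, Symbol.terminal (term j, j) :: (rest j).map Symbol.nonterminal⟩, ?_, ?_⟩
      · change _ ∈ Finset.univ.image (fun j : Fin m => (⟨lhs j, Symbol.terminal (term j, j) :: (rest j).map Symbol.nonterminal⟩ : ContextFreeRule (T × Fin m) N))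
        simp only [annotatedGrammar, Finset.mem_image, Finset.mem_univ, true_and]
        exact ⟨j, rfl⟩
      · exact ContextFreeRule.rewrites_of_exists_parts
          ⟨lhs j, Symbol.terminal (term j, j) :: (rest j).map Symbol.nonterminal⟩ p₁ u₂
    obtain ⟨v', hd, hv'⟩ := ih
      (p₁ ++ (Symbol.terminal (term j, j) :: (rest j).map Symbol.nonterminal) ++ u₂)
      (by simp [hp₁, hu₂, projSym, List.map_map, Function.comp_def]; exact (List.append_assoc p
        (Symbol.terminal (term j) :: List.map Symbol.nonterminal (rest j)) q).symm)
    exact ⟨v', Relation.ReflTransGen.head hmid hd, hv'⟩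

end

lemma all_terminals {T N : Type} {m : ℕ} :
    ∀ (v' : List (Symbol (T × Fin m) N)) (l : List T),
      v'.map projSym = l.map Symbol.terminal →
      ∃ w : List (T × Fin m), v' = w.map Symbol.terminal ∧ w.map Prod.fst = l := by
  intro v'
  induction v' with
  | nil =>
    intro l h
    refine ⟨[], rfl, ?_⟩
    cases l with
    | nil => rfl
    | cons b l => simp at h
  | cons x xs ih =>
    intro l h
    cases l with
    | nil => simp at h
    | cons b l =>
      simp only [List.map_cons] at h
      obtain ⟨h1, h2⟩ := List.cons.injEq _ _ _ _ ▸ h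
      cases x with
      | nonterminal A => simp [projSym] at h1
      | terminal t =>
        obtain ⟨w, hw1, hw2⟩ := ih l h2
        have ht : t.1 = b := by simpa [projSym] using h1
        exact ⟨t :: w, by simp [hw1], by simp [ht, hw2]⟩

/-- Let `G` be an ε-free context-free grammar in Greibach form with productions enumerated
`p₁, …, p_m` and let `s = s₁⋯sₙ` be a string over `T`.  With `G′` the annotated grammar over
`T′ = T × {1,…,m}` and `Dᵢ = {(a, j) ∈ T′ : a = sᵢ}`, we have
`L(G′) ∩ L(R_{D₁,…,Dₙ}) ≠ ∅` iff `s ∈ L(G)`. -/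
theorem annotated_inter_cartesian_nonempty_iff_mem
    {T N : Type} [Fintype T] [DecidableEq T] [DecidableEq N] (S : N) (m : ℕ)
    (lhs : Fin m → N) (term : Fin m → T) (rest : Fin m → List N)
    (n : ℕ) (s : Fin n → T) :
    ((annotatedGrammar S m lhs term rest).language ⊓
        cartesianLanguage n (fun i => {x : T × Fin m | x.1 = s i}) :
      Language (T × Fin m)).Nonempty ↔
      List.ofFn s ∈ (greibachGrammar S m lhs term rest).language := by
  constructor
  · rintro ⟨w, hw, a, ha, rfl⟩
    change List.ofFn a ∈ (annotatedGrammar S m lhs term rest).language at hw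
    rw [ContextFreeGrammar.mem_language_iff] at hw ⊢
    have h := derives_proj hw
    have h1 : List.map projSym
        [Symbol.nonterminal (T := T × Fin m) (N := N)
          (annotatedGrammar S m lhs term rest).initial] =
        [Symbol.nonterminal (greibachGrammar S m lhs term rest).initial] := by
      simp [projSym, annotatedGrammar, greibachGrammar]
    have h2 : List.map projSym (List.map Symbol.terminal (List.ofFn a)) =
        List.map (Symbol.terminal (N := N)) (List.ofFn s) := by
      simp only [List.map_map, List.map_ofFn]
      congr 1
      funext i
      have := ha i
      simp only [Set.mem_setOf_eq] at this
      simp [projSym, Function.comp, this]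
    erw [h1, h2] at h
    exact h
  · intro hs
    rw [ContextFreeGrammar.mem_language_iff] at hs
    obtain ⟨v', hd, hv'⟩ := derives_lift hs [Symbol.nonterminal S] rfl
    obtain ⟨w, rfl, hw⟩ := all_terminals v' (List.ofFn s) hv'
    have hlen : w.length = n := by
      have := congrArg List.length hw; simpa using this
    refine ⟨w, ?_, ?_⟩
    · change w ∈ (annotatedGrammar S m lhs term rest).language
      rw [ContextFreeGrammar.mem_language_iff]; exact hd
    · refine ⟨fun i => w.get (Fin.cast hlen.symm i), fun i => ?_, ?_⟩
      · show (w.get (Fin.cast hlen.symm i)).1 = s i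
        have hg := List.getElem_of_eq hw (i := (i : ℕ)) (by simp [hlen])
        simpa using hg
      · apply List.ext_get (by simp [hlen])
        intro i h1 h2
        simp [List.get_ofFn]
end

section
/- Let G = ⟨N, T, P, S⟩ be an ε-free context-free grammar in Greibach form whose terminals are indexed as T = {t₁, …, t_k}, and let D₁, …, Dₙ be finite subsets of T. Construct the grammar G′ over the terminal alphabet {0, 1} with non-terminals N ∪ {B} ∪ {T₁, …, T_k} (all new symbols fresh) and productions: B → 0, B → 1; for each j ∈ {1,…,k}, T_j → B^{j−1} 1 B^{k−j}; and for each production A → t_j α of G, the production A → T_j α. Let s be the string of length nk obtained by concatenating, for i = 1, …, n, the bitmap bᵢ ∈ {0,1}^k whose j-th bit is 1 iff t_j ∈ Dᵢ. Then s ∈ L(G′) if and only if L(G) ∩ L(R_{D₁,…,Dₙ}) ≠ ∅. -/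
/-- An ε-free context-free grammar in Greibach form over the indexed terminal alphabet
`T = {t₁, …, t_k}` (modelled as `Fin k`), with nonterminals `N`, start symbol `S`, and
production set `P`, where `(A, j, α) ∈ P` represents the production `A → t_j α`
(a terminal followed by a list of nonterminals). -/
def greibachGrammarFin {N : Type} [DecidableEq N] (k : ℕ) (S : N)
    (P : Finset (N × Fin k × List N)) : ContextFreeGrammar (Fin k) :=
  ⟨N, S, P.image fun x =>
    ⟨x.1, Symbol.terminal x.2.1 :: x.2.2.map Symbol.nonterminal⟩⟩

/-- The bitmap grammar `G′` over the terminal alphabet `{0,1}` (modelled as `Bool`):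
its nonterminals are `N ∪ {B} ∪ {T₁, …, T_k}` (with `B = Sum.inr none` and
`T_j = Sum.inr (some j)`, all fresh), and its productions are `B → 0`, `B → 1`,
`T_j → B^{j−1} 1 B^{k−j}` for each `j`, and `A → T_j α` for each production `A → t_j α`. -/
def bitmapGrammar {N : Type} [DecidableEq N] (k : ℕ) (S : N)
    (P : Finset (N × Fin k × List N)) : ContextFreeGrammar Bool :=
  ⟨N ⊕ Option (Fin k), Sum.inl S,
    {⟨Sum.inr none, [Symbol.terminal false]⟩, ⟨Sum.inr none, [Symbol.terminal true]⟩}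
    ∪ (Finset.univ.image fun j : Fin k =>
        ⟨Sum.inr (some j),
          List.replicate j.val (Symbol.nonterminal (Sum.inr none)) ++
            Symbol.terminal true ::
              List.replicate (k - 1 - j.val) (Symbol.nonterminal (Sum.inr none))⟩)
    ∪ (P.image fun x =>
        ⟨Sum.inl x.1,
          Symbol.nonterminal (Sum.inr (some x.2.1)) ::
            x.2.2.map (fun B => Symbol.nonterminal (Sum.inl B))⟩)⟩



namespace ContextFreeGrammar
variable {T : Type} {g : ContextFreeGrammar T}

lemma derives_split_aux {w : List (Symbol T g.NT)} :
    ∀ {x : List (Symbol T g.NT)}, g.Derives x w → ∀ {u v : List (Symbol T g.NT)}, x = u ++ v →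
      ∃ w₁ w₂, w = w₁ ++ w₂ ∧ g.Derives u w₁ ∧ g.Derives v w₂ := by
  intro x hx
  induction hx using Relation.ReflTransGen.head_induction_on with
  | refl => rintro u v rfl; exact ⟨u, v, rfl, Derives.refl u, Derives.refl v⟩
  | head hstep _ ih =>
    rintro u v rfl
    obtain ⟨r, hr, hrw⟩ := hstep
    obtain ⟨p, q, hpq, rfl⟩ := hrw.exists_parts
    rw [List.append_assoc] at hpq
    rcases List.append_eq_append_iff.mp hpq with ⟨a, ha, hv⟩ | ⟨c, hu, hc⟩
    · -- p = u ++ a, v = a ++ ([nt] ++ q)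
      subst ha
      obtain ⟨w₁, w₂, rfl, hu', hrest⟩ := ih (u := u) (v := a ++ r.output ++ q) (by simp)
      refine ⟨w₁, w₂, rfl, hu', Produces.trans_derives ⟨r, hr, ?_⟩ hrest⟩
      rw [hv]
      simpa using ContextFreeRule.rewrites_of_exists_parts r a q
    · rcases c with _ | ⟨s, c⟩
      · -- u = p, v = [nt] ++ q
        rw [List.append_nil] at hu
        rw [List.nil_append] at hc
        subst hu
        obtain ⟨w₁, w₂, rfl, hu', hrest⟩ := ih (u := u) (v := r.output ++ q) (by simp)
        refine ⟨w₁, w₂, rfl, hu', Produces.trans_derives ⟨r, hr, ?_⟩ hrest⟩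
        rw [← hc]
        exact ContextFreeRule.Rewrites.head q
      · -- u = p ++ nt :: c, q = c ++ v
        have hs : s = Symbol.nonterminal r.input := by
          have := congrArg (fun l => l.head?) hc; simpa using this.symm
        subst hs
        have hq : q = c ++ v := by
          have := congrArg (fun l => l.tail) hc; simpa using this
        subst hq hu
        obtain ⟨w₁, w₂, rfl, hu', hrest⟩ :=
          ih (u := p ++ r.output ++ c) (v := v) (by simp)
        refine ⟨w₁, w₂, rfl, Produces.trans_derives ⟨r, hr, ?_⟩ hu', hrest⟩
        simpa using ContextFreeRule.rewrites_of_exists_parts r p c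

lemma derives_append_split {u v w : List (Symbol T g.NT)} (h : g.Derives (u ++ v) w) :
    ∃ w₁ w₂, w = w₁ ++ w₂ ∧ g.Derives u w₁ ∧ g.Derives v w₂ :=
  derives_split_aux h rfl

lemma derives_of_terminals {t : List T} {w : List (Symbol T g.NT)}
    (h : g.Derives (t.map Symbol.terminal) w) : w = t.map Symbol.terminal := by
  rcases h.eq_or_head with heq | ⟨v, ⟨r, _, hrw⟩, _⟩
  · exact heq.symm
  · exfalso
    obtain ⟨p, q, hpq, -⟩ := hrw.exists_parts
    have : Symbol.nonterminal r.input ∈ t.map Symbol.terminal := by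
      rw [hpq]; simp
    simp at this

lemma derives_nt_head {X : g.NT} {w : List (Symbol T g.NT)}
    (h : g.Derives [Symbol.nonterminal X] w) (hw : w ≠ [Symbol.nonterminal X]) :
    ∃ r ∈ g.rules, r.input = X ∧ g.Derives r.output w := by
  rcases h.eq_or_head with heq | ⟨v, ⟨r, hr, hrw⟩, hder⟩
  · exact absurd heq.symm hw
  · obtain ⟨p, q, hpq, rfl⟩ := hrw.exists_parts
    rcases p with _ | ⟨s, p⟩
    · have hX : r.input = X := by
        have := congrArg (fun l => l.head?) hpq; simpa using this.symm
      have hq : q = [] := by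
        have := congrArg (fun l => l.tail) hpq; simpa using this
      subst hq
      exact ⟨r, hr, hX, by simpa using hder⟩
    · exfalso
      have := congrArg List.length hpq
      simp at this

lemma derives_length_le (hne : ∀ r ∈ g.rules, r.output ≠ [])
    {u v : List (Symbol T g.NT)} (h : g.Derives u v) : u.length ≤ v.length := by
  induction h with
  | refl => exact le_refl _
  | tail _ hprod ih =>
    obtain ⟨r, hr, hrw⟩ := hprod
    obtain ⟨p, q, hb, hc⟩ := hrw.exists_parts
    have h1 : 1 ≤ r.output.length := by
      have := hne r hr
      cases hout : r.output
      · exact absurd hout this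
      · simp
    have := congrArg List.length hb
    have := congrArg List.length hc
    simp only [List.length_append, List.length_cons, List.length_nil] at *
    omega

end ContextFreeGrammar

section Bitmap
variable {N : Type} [DecidableEq N] {k : ℕ} {S : N} {P : Finset (N × Fin k × List N)}

lemma mem_bitmapGrammar_rules {r : ContextFreeRule Bool (N ⊕ Option (Fin k))} :
    r ∈ (bitmapGrammar k S P).rules ↔
      r = ⟨Sum.inr none, [Symbol.terminal false]⟩ ∨
      r = ⟨Sum.inr none, [Symbol.terminal true]⟩ ∨
      (∃ j : Fin k, r = ⟨Sum.inr (some j),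
          List.replicate j.val (Symbol.nonterminal (Sum.inr none)) ++
            Symbol.terminal true ::
              List.replicate (k - 1 - j.val) (Symbol.nonterminal (Sum.inr none))⟩) ∨
      (∃ x ∈ P, r = ⟨Sum.inl x.1,
          Symbol.nonterminal (Sum.inr (some x.2.1)) ::
            x.2.2.map (fun B => Symbol.nonterminal (Sum.inl B))⟩) := by
  show r ∈ (_ ∪ _ ∪ _ : Finset (ContextFreeRule Bool (N ⊕ Option (Fin k)))) ↔ _
  simp only [Finset.mem_union, Finset.mem_insert, Finset.mem_singleton, Finset.mem_image,
    Finset.mem_univ, true_and, or_assoc]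
  tauto

lemma mem_greibachGrammarFin_rules {r : ContextFreeRule (Fin k) N} :
    r ∈ (greibachGrammarFin k S P).rules ↔
      ∃ x ∈ P, r = ⟨x.1, Symbol.terminal x.2.1 :: x.2.2.map Symbol.nonterminal⟩ := by
  show r ∈ Finset.image _ _ ↔ _
  simp only [Finset.mem_image]
  tauto

lemma bitmap_output_ne {r : ContextFreeRule Bool (N ⊕ Option (Fin k))}
    (hr : r ∈ (bitmapGrammar k S P).rules) : r.output ≠ [] := by
  rcases mem_bitmapGrammar_rules.mp hr with rfl | rfl | ⟨j, rfl⟩ | ⟨x, -, rfl⟩ <;> simp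

lemma greibach_output_ne {r : ContextFreeRule (Fin k) N}
    (hr : r ∈ (greibachGrammarFin k S P).rules) : r.output ≠ [] := by
  rcases mem_greibachGrammarFin_rules.mp hr with ⟨x, -, rfl⟩; simp

def BlockP (k : ℕ) (j : Fin k) (t : List Bool) : Prop :=
  t.length = k ∧ t[(j : ℕ)]? = some true

def SymLang (k : ℕ) (S : N) (P : Finset (N × Fin k × List N)) :
    Symbol Bool (N ⊕ Option (Fin k)) → List Bool → Prop
  | .terminal b, t => t = [b]
  | .nonterminal (.inr none), t => t.length = 1
  | .nonterminal (.inr (some j)), t => BlockP k j t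
  | .nonterminal (.inl A), t => ∃ js : List (Fin k),
      (greibachGrammarFin k S P).Derives [Symbol.nonterminal A] (js.map Symbol.terminal) ∧
      ∃ ts : List (List Bool), List.Forall₂ (BlockP k) js ts ∧ t = ts.flatten

def Good (k : ℕ) (S : N) (P : Finset (N × Fin k × List N))
    (v : List (Symbol Bool (N ⊕ Option (Fin k)))) (t : List Bool) : Prop :=
  ∃ ts : List (List Bool), List.Forall₂ (SymLang k S P) v ts ∧ t = ts.flatten

lemma forall₂_append_split {α β : Type*} {R : α → β → Prop} :
    ∀ {l₁ l₂ : List α} {l : List β}, List.Forall₂ R (l₁ ++ l₂) l →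
      ∃ m₁ m₂, l = m₁ ++ m₂ ∧ List.Forall₂ R l₁ m₁ ∧ List.Forall₂ R l₂ m₂ := by
  intro l₁
  induction l₁ with
  | nil => intro l₂ l h; exact ⟨[], l, rfl, List.Forall₂.nil, h⟩
  | cons a l₁ ih =>
    intro l₂ l h
    rw [List.cons_append] at h
    rcases h with _ | ⟨hab, h⟩
    obtain ⟨m₁, m₂, rfl, h₁, h₂⟩ := ih h
    exact ⟨_ :: m₁, m₂, rfl, List.Forall₂.cons hab h₁, h₂⟩

lemma good_append_split {u v : List (Symbol Bool (N ⊕ Option (Fin k)))} {t : List Bool}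
    (h : Good k S P (u ++ v) t) :
    ∃ t₁ t₂, t = t₁ ++ t₂ ∧ Good k S P u t₁ ∧ Good k S P v t₂ := by
  obtain ⟨ts, hf, rfl⟩ := h
  obtain ⟨m₁, m₂, rfl, h₁, h₂⟩ := forall₂_append_split hf
  exact ⟨m₁.flatten, m₂.flatten, by simp, ⟨m₁, h₁, rfl⟩, ⟨m₂, h₂, rfl⟩⟩

lemma Good.append {u v : List (Symbol Bool (N ⊕ Option (Fin k)))} {t₁ t₂ : List Bool}
    (h₁ : Good k S P u t₁) (h₂ : Good k S P v t₂) : Good k S P (u ++ v) (t₁ ++ t₂) := by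
  obtain ⟨m₁, hf₁, rfl⟩ := h₁
  obtain ⟨m₂, hf₂, rfl⟩ := h₂
  exact ⟨m₁ ++ m₂, List.rel_append hf₁ hf₂, by simp⟩

lemma good_single {s : Symbol Bool (N ⊕ Option (Fin k))} {t : List Bool} :
    Good k S P [s] t ↔ SymLang k S P s t := by
  constructor
  · rintro ⟨ts, hf, rfl⟩
    rcases hf with _ | ⟨h, hnil⟩
    rcases hnil
    simpa using h
  · intro h
    exact ⟨[t], List.Forall₂.cons h List.Forall₂.nil, by simp⟩

lemma flatten_map_singleton {α : Type*} (t : List α) : (t.map fun b => [b]).flatten = t := by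
  induction t with
  | nil => rfl
  | cons b t ih => simp [ih]

lemma good_refl {t : List Bool} : Good k S P (t.map Symbol.terminal) t := by
  refine ⟨t.map (fun b => [b]), ?_, (flatten_map_singleton t).symm⟩
  induction t with
  | nil => exact List.Forall₂.nil
  | cons b t ih => exact List.Forall₂.cons rfl ih

lemma good_replicate_len {m : ℕ} {t : List Bool}
    (h : Good k S P (List.replicate m (Symbol.nonterminal (Sum.inr none))) t) :
    t.length = m := by
  induction m generalizing t with
  | zero => obtain ⟨ts, hf, rfl⟩ := h; rcases hf; simp
  | succ m ih =>
    rw [List.replicate_succ] at h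
    obtain ⟨ts, hf, rfl⟩ := h
    rcases hf with _ | ⟨h1, hrest⟩
    rename_i b m'
    have hm : m'.flatten.length = m := ih ⟨m', hrest, rfl⟩
    have hb : b.length = 1 := h1
    simp only [List.flatten_cons, List.length_append, hb, hm]
    omega

end Bitmap

section Crux
variable {N : Type} [DecidableEq N] {k : ℕ} {S : N} {P : Finset (N × Fin k × List N)}

open ContextFreeGrammar

lemma gather {l : List N} {t : List Bool}
    (h : Good k S P (l.map fun B => Symbol.nonterminal (Sum.inl B)) t) :
    ∃ js : List (Fin k),
      (greibachGrammarFin k S P).Derives (l.map Symbol.nonterminal) (js.map Symbol.terminal) ∧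
      ∃ ts : List (List Bool), List.Forall₂ (BlockP k) js ts ∧ t = ts.flatten := by
  induction l generalizing t with
  | nil =>
    obtain ⟨ts, hf, rfl⟩ := h
    rcases hf
    exact ⟨[], Derives.refl _, [], List.Forall₂.nil, rfl⟩
  | cons B l ih =>
    rw [List.map_cons, ← List.singleton_append] at h
    obtain ⟨t₀, t₁, rfl, h₀, h₁⟩ := good_append_split h
    obtain ⟨js₀, hd₀, ts₀, hf₀, rfl⟩ := good_single.mp h₀
    obtain ⟨js₁, hd₁, ts₁, hf₁, rfl⟩ := ih h₁
    refine ⟨js₀ ++ js₁, ?_, ts₀ ++ ts₁, List.rel_append hf₀ hf₁, by simp⟩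
    have := (hd₀.append_right (l.map Symbol.nonterminal)).trans (hd₁.append_left (js₀.map Symbol.terminal))
    rw [← List.map_append] at this
    exact this

lemma good_step {v v' : List (Symbol Bool (N ⊕ Option (Fin k)))} {t : List Bool}
    (hp : (bitmapGrammar k S P).Produces v v') (h : Good k S P v' t) : Good k S P v t := by
  obtain ⟨r, hr, hrw⟩ := hp
  obtain ⟨p, q, rfl, rfl⟩ := hrw.exists_parts
  rw [List.append_assoc] at h
  obtain ⟨t₁, t₂₃, rfl, hgp, h'⟩ := good_append_split h
  obtain ⟨t₂, t₃, rfl, hgo, hgq⟩ := good_append_split h'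
  have key : SymLang k S P (Symbol.nonterminal r.input) t₂ := by
    rcases mem_bitmapGrammar_rules.mp hr with rfl | rfl | ⟨j, rfl⟩ | ⟨x, hx, rfl⟩
    · have := good_single.mp hgo
      show t₂.length = 1
      rw [show t₂ = [false] from this]; rfl
    · have := good_single.mp hgo
      show t₂.length = 1
      rw [show t₂ = [true] from this]; rfl
    · -- T_j rule
      show BlockP k j t₂
      rw [show (Symbol.terminal true :: List.replicate (k - 1 - j.val)
            (Symbol.nonterminal (Sum.inr none : N ⊕ Option (Fin k))) :
            List (Symbol Bool (N ⊕ Option (Fin k)))) =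
          [Symbol.terminal true] ++ List.replicate (k - 1 - j.val)
            (Symbol.nonterminal (Sum.inr none)) from rfl] at hgo
      obtain ⟨x, yz, rfl, hgx, h''⟩ := good_append_split hgo
      obtain ⟨y, z, rfl, hgy, hgz⟩ := good_append_split h''
      have hx : x.length = j.val := good_replicate_len hgx
      have hz : z.length = k - 1 - j.val := good_replicate_len hgz
      have hy : y = [true] := good_single.mp hgy
      subst hy
      constructor
      · simp only [List.length_append, hx, hz, List.length_cons, List.length_nil]
        have := j.isLt
        omega
      · rw [List.getElem?_append_right (by omega), hx]
        simp
    · -- A → T_j α rule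
      rw [← List.singleton_append] at hgo
      obtain ⟨b, rest, rfl, hgb, hgrest⟩ := good_append_split hgo
      have hb : BlockP k x.2.1 b := good_single.mp hgb
      obtain ⟨js, hder, ts, hf, rfl⟩ := gather hgrest
      refine ⟨x.2.1 :: js, ?_, b :: ts, List.Forall₂.cons hb hf, by simp⟩
      have hrule : (⟨x.1, Symbol.terminal x.2.1 :: x.2.2.map Symbol.nonterminal⟩ :
          ContextFreeRule (Fin k) N) ∈ (greibachGrammarFin k S P).rules :=
        mem_greibachGrammarFin_rules.mpr ⟨x, hx, rfl⟩
      refine Produces.trans_derives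
        ⟨_, hrule, ContextFreeRule.Rewrites.input_output⟩ ?_
      rw [show (Symbol.terminal x.2.1 :: x.2.2.map Symbol.nonterminal :
            List (Symbol (Fin k) N)) =
          [Symbol.terminal x.2.1] ++ x.2.2.map Symbol.nonterminal from rfl,
        List.map_cons, ← List.singleton_append]
      exact hder.append_left _
  have := (Good.append hgp (Good.append (good_single.mpr key) hgq))
  rw [← List.append_assoc] at this
  have h' := Good.append (Good.append hgp (good_single.mpr key)) hgq
  rwa [List.append_assoc t₁ t₂ t₃] at h'

lemma good_of_derives {v : List (Symbol Bool (N ⊕ Option (Fin k)))} {t : List Bool}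
    (h : (bitmapGrammar k S P).Derives v (t.map Symbol.terminal)) : Good k S P v t := by
  induction h using Relation.ReflTransGen.head_induction_on with
  | refl => exact good_refl
  | head hstep _ ih => exact good_step hstep ih

end Crux

section Backward
variable {N : Type} [DecidableEq N] {k : ℕ} {S : N} {P : Finset (N × Fin k × List N)}

open ContextFreeGrammar

def liftSym : Symbol (Fin k) N → Symbol Bool (N ⊕ Option (Fin k))
  | .terminal j => .nonterminal (Sum.inr (some j))
  | .nonterminal A => .nonterminal (Sum.inl A)

lemma derives_lift_s4 {u v : List (Symbol (Fin k) N)}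
    (h : (greibachGrammarFin k S P).Derives u v) :
    (bitmapGrammar k S P).Derives (u.map liftSym) (v.map liftSym) := by
  induction h with
  | refl => exact Derives.refl _
  | tail _ hprod ih =>
    obtain ⟨r, hr, hrw⟩ := hprod
    obtain ⟨x, hx, rfl⟩ := mem_greibachGrammarFin_rules.mp hr
    obtain ⟨p, q, rfl, rfl⟩ := hrw.exists_parts
    refine ih.trans_produces ⟨⟨Sum.inl x.1, Symbol.nonterminal (Sum.inr (some x.2.1)) ::
        x.2.2.map (fun B => Symbol.nonterminal (Sum.inl B))⟩,
      mem_bitmapGrammar_rules.mpr (Or.inr (Or.inr (Or.inr ⟨x, hx, rfl⟩))), ?_⟩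
    have := ContextFreeRule.rewrites_of_exists_parts
      (⟨Sum.inl x.1, Symbol.nonterminal (Sum.inr (some x.2.1)) ::
        x.2.2.map (fun B => Symbol.nonterminal (Sum.inl B))⟩ :
          ContextFreeRule Bool (N ⊕ Option (Fin k)))
      (p.map liftSym) (q.map liftSym)
    have e1 : ∀ (p q : List (Symbol (Fin k) N)) (A : N),
        List.map liftSym (p ++ [Symbol.nonterminal A] ++ q) =
        List.map liftSym p ++ [Symbol.nonterminal (Sum.inl A)] ++ List.map liftSym q := by
      intros; simp [liftSym]
    have e2 : ∀ (p q : List (Symbol (Fin k) N)) (j : Fin k) (l : List N),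
        List.map liftSym (p ++ (Symbol.terminal j :: List.map Symbol.nonterminal l) ++ q) =
        List.map liftSym p ++ (Symbol.nonterminal (Sum.inr (some j)) ::
          List.map (fun B => Symbol.nonterminal (Sum.inl B)) l) ++ List.map liftSym q := by
      intros; simp [liftSym, Function.comp_def]
    exact (congrArg₂ (ContextFreeRule.Rewrites _) (e1 p q x.1) (e2 p q x.2.1 x.2.2)).mpr this

lemma rep_derives (t : List Bool) :
    (bitmapGrammar k S P).Derives
      (List.replicate t.length (Symbol.nonterminal (Sum.inr none))) (t.map Symbol.terminal) := by
  induction t with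
  | nil => exact Derives.refl _
  | cons b t ih =>
    rw [List.length_cons, List.replicate_succ, List.map_cons, ← List.singleton_append,
      ← List.singleton_append (l := t.map Symbol.terminal)]
    have hrule : (⟨Sum.inr none, [Symbol.terminal b]⟩ :
        ContextFreeRule Bool (N ⊕ Option (Fin k))) ∈ (bitmapGrammar k S P).rules := by
      cases b
      · exact mem_bitmapGrammar_rules.mpr (Or.inl rfl)
      · exact mem_bitmapGrammar_rules.mpr (Or.inr (Or.inl rfl))
    refine Produces.trans_derives ⟨_, hrule, ?_⟩ (ih.append_left _)
    exact ContextFreeRule.Rewrites.input_output.append_right _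

lemma block_derives {j : Fin k} {t : List Bool} (hlen : t.length = k)
    (hj : t[(j : ℕ)]? = some true) :
    (bitmapGrammar k S P).Derives [Symbol.nonterminal (Sum.inr (some j))]
      (t.map Symbol.terminal) := by
  have hjk : (j : ℕ) < t.length := by rw [hlen]; exact j.isLt
  have hsplit : t = t.take j ++ true :: t.drop (j + 1) := by
    have h1 := List.take_append_drop (j : ℕ) t
    have h2 : t.drop (j : ℕ) = t[(j : ℕ)] :: t.drop ((j : ℕ) + 1) := List.drop_eq_getElem_cons hjk
    have h3 : t[(j : ℕ)] = true := by
      rw [List.getElem?_eq_getElem hjk] at hj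
      exact Option.some.inj hj
    rw [h3] at h2
    conv_lhs => rw [← h1, h2]
  have hrule : (⟨Sum.inr (some j),
      List.replicate j.val (Symbol.nonterminal (Sum.inr none)) ++
        Symbol.terminal true ::
          List.replicate (k - 1 - j.val) (Symbol.nonterminal (Sum.inr none))⟩ :
      ContextFreeRule Bool (N ⊕ Option (Fin k))) ∈ (bitmapGrammar k S P).rules :=
    mem_bitmapGrammar_rules.mpr (Or.inr (Or.inr (Or.inl ⟨j, rfl⟩)))
  refine Produces.trans_derives ⟨_, hrule, ContextFreeRule.Rewrites.input_output⟩ ?_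
  have htake : (t.take (j : ℕ)).length = (j : ℕ) := by
    rw [List.length_take]; omega
  have hdrop : (t.drop ((j : ℕ) + 1)).length = k - 1 - (j : ℕ) := by
    rw [List.length_drop]; omega
  conv_rhs => rw [hsplit]
  rw [List.map_append, List.map_cons]
  have d1 : (bitmapGrammar k S P).Derives
      (List.replicate j.val (Symbol.nonterminal (Sum.inr none)))
      ((t.take (j : ℕ)).map Symbol.terminal) := by
    have := rep_derives (S := S) (P := P) (t.take (j : ℕ))
    rw [htake] at this; exact this
  have d2 : (bitmapGrammar k S P).Derives
      (List.replicate (k - 1 - j.val) (Symbol.nonterminal (Sum.inr none)))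
      ((t.drop ((j : ℕ) + 1)).map Symbol.terminal) := by
    have := rep_derives (S := S) (P := P) (t.drop ((j : ℕ) + 1))
    rw [hdrop] at this; exact this
  refine (d1.append_right _).trans ?_
  exact ((d2.append_left [Symbol.terminal true]).append_left _)

lemma derives_flatten {ι : Type} (l : List ι) (F : ι → N ⊕ Option (Fin k)) (h : ι → List Bool)
    (hder : ∀ x ∈ l, (bitmapGrammar k S P).Derives [Symbol.nonterminal (F x)]
      ((h x).map Symbol.terminal)) :
    (bitmapGrammar k S P).Derives (l.map fun x => Symbol.nonterminal (F x))
      (((l.map h).flatten).map Symbol.terminal) := by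
  induction l with
  | nil => exact Derives.refl _
  | cons a l ih =>
    rw [List.map_cons, ← List.singleton_append, List.map_cons, List.flatten_cons,
      List.map_append]
    refine ((hder a List.mem_cons_self).append_right _).trans ?_
    exact (ih fun x hx => hder x (List.mem_cons_of_mem a hx)).append_left _

lemma flatten_unique {α : Type*} (hk : 0 < k) :
    ∀ {l₁ l₂ : List (List α)}, (∀ x ∈ l₁, x.length = k) → (∀ x ∈ l₂, x.length = k) →
      l₁.flatten = l₂.flatten → l₁ = l₂ := by
  intro l₁
  induction l₁ with
  | nil =>
    intro l₂ _ h₂ hf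
    cases l₂ with
    | nil => rfl
    | cons y l₂ =>
      exfalso
      have hy : y.length = k := h₂ y List.mem_cons_self
      have hlen := congrArg List.length hf
      simp only [List.flatten_cons, List.flatten_nil, List.length_nil, List.length_append]
        at hlen
      omega
  | cons x l₁ ih =>
    intro l₂ h₁ h₂ hf
    cases l₂ with
    | nil =>
      exfalso
      have hx : x.length = k := h₁ x List.mem_cons_self
      have hlen := congrArg List.length hf
      simp only [List.flatten_cons, List.flatten_nil, List.length_nil, List.length_append]
        at hlen
      omega
    | cons y l₂ =>
      simp only [List.flatten_cons] at hf
      have hx : x.length = k := h₁ x List.mem_cons_self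
      have hy : y.length = k := h₂ y List.mem_cons_self
      obtain ⟨rfl, hf'⟩ := List.append_inj hf (by omega)
      rw [ih (fun z hz => h₁ z (List.mem_cons_of_mem _ hz))
        (fun z hz => h₂ z (List.mem_cons_of_mem _ hz)) hf']

lemma blocks_length {js : List (Fin k)} {ts : List (List Bool)}
    (h : List.Forall₂ (BlockP k) js ts) : ∀ b ∈ ts, b.length = k := by
  induction h with
  | nil => intro b hb; simp at hb
  | cons hab _ ih =>
    intro b hb
    rcases List.mem_cons.mp hb with rfl | hb
    · exact hab.1
    · exact ih b hb

end Backward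

/-- Let `G` be an ε-free Greibach-form grammar over the indexed alphabet `T = {t₁,…,t_k}`
and let `D₁, …, Dₙ` be finite subsets of `T`.  Let `G′` be the bitmap grammar over `{0,1}`
and let `s` be the concatenation of the bitmaps `bᵢ ∈ {0,1}^k`, where the `j`-th bit of `bᵢ`
is `1` iff `t_j ∈ Dᵢ`.  Then `s ∈ L(G′)` iff `L(G) ∩ L(R_{D₁,…,Dₙ}) ≠ ∅`. -/
theorem bitmap_string_mem_iff_inter_nonempty
    {N : Type} [DecidableEq N] (k : ℕ) (S : N) (P : Finset (N × Fin k × List N))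
    (n : ℕ) (D : Fin n → Finset (Fin k)) :
    (List.ofFn fun i : Fin n =>
        List.ofFn fun j : Fin k => decide (j ∈ D i)).flatten ∈
        (bitmapGrammar k S P).language ↔
      ((greibachGrammarFin k S P).language ⊓
          cartesianLanguage n (fun i => (D i : Set (Fin k))) :
        Language (Fin k)).Nonempty := by
  constructor
  · intro h
    rw [ContextFreeGrammar.mem_language_iff] at h
    obtain ⟨js, hder, ts, hblocks, hs⟩ := good_single.mp (good_of_derives h)
    rcases Nat.eq_zero_or_pos k with hk | hk
    · exfalso
      subst hk
      cases js with
      | nil =>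
        have := ContextFreeGrammar.derives_length_le (fun r hr => greibach_output_ne (N := N) hr) hder
        simp at this
      | cons j _ => exact j.elim0
    · have hts_len : ∀ b ∈ ts, b.length = k := blocks_length hblocks
      have hofn : ∀ b ∈ (List.ofFn fun i : Fin n =>
          List.ofFn fun j : Fin k => decide (j ∈ D i)), b.length = k := by
        intro b hb
        rw [List.mem_ofFn] at hb
        obtain ⟨i, rfl⟩ := hb
        simp
      have hts : ts = List.ofFn fun i : Fin n =>
          List.ofFn fun j : Fin k => decide (j ∈ D i) :=
        flatten_unique hk hts_len hofn hs.symm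
      subst hts
      have hlen : js.length = n := by
        have := hblocks.length_eq
        simpa using this
      have hidx := (List.forall₂_iff_get.mp hblocks).2
      refine ⟨List.ofFn (fun i : Fin n => js.get ⟨(i : ℕ), by omega⟩), ?_, ?_⟩
      · erw [ContextFreeGrammar.mem_language_iff]
        have heq : List.ofFn (fun i : Fin n => js.get ⟨(i : ℕ), by omega⟩) = js := by
          apply List.ext_getElem
          · simp [hlen]
          · intro i h1 h2
            simp [List.getElem_ofFn]
        rw [heq]
        exact hder
      · refine ⟨fun i => js.get ⟨(i : ℕ), by omega⟩, fun i => ?_, rfl⟩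
        have hb := hidx (i : ℕ) (by omega) (by simp [hlen])
        obtain ⟨hblen, hbtrue⟩ := hb
        set jj : Fin k := js.get ⟨(i : ℕ), by omega⟩ with hjj
        rw [List.get_ofFn] at hbtrue
        simp only [Fin.cast_mk, Fin.eta] at hbtrue
        have heval : (List.ofFn fun j : Fin k => decide (j ∈ D i))[(jj : ℕ)]? =
            some (decide (jj ∈ D i)) := by
          rw [List.getElem?_eq_getElem (by simpa using jj.isLt)]
          simp
        rw [heval] at hbtrue
        simpa [hjj] using hbtrue
  · rintro ⟨w, hw, a, ha, hwa⟩
    subst hwa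
    erw [ContextFreeGrammar.mem_language_iff] at hw ⊢
    have hlift := derives_lift_s4 hw
    have h2 : List.map (liftSym (N := N)) (List.map Symbol.terminal (List.ofFn a)) =
        List.map (fun i => Symbol.nonterminal (Sum.inr (some (a i))))
          (List.finRange n) := by
      rw [List.map_map, List.ofFn_eq_map, List.map_map]
      rfl
    erw [h2] at hlift
    have hmain := derives_flatten (S := S) (P := P) (List.finRange n)
      (fun i => Sum.inr (some (a i)))
      (fun i => List.ofFn fun j : Fin k => decide (j ∈ D i))
      (fun i _ => by
        refine block_derives (by simp) ?_
        rw [List.getElem?_eq_getElem (by simpa using (a i).isLt)]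
        have hai : a i ∈ D i := ha i
        simp [hai])
    rw [show (List.ofFn fun i : Fin n => List.ofFn fun j : Fin k => decide (j ∈ D i)) =
        List.map (fun i => List.ofFn fun j : Fin k => decide (j ∈ D i)) (List.finRange n)
      from List.ofFn_eq_map]
    exact hlift.trans hmain
end

section
/- Let Σ be a finite alphabet, let # be a symbol not in Σ, and let N be a natural number. Consider the linear context-free grammar over terminal alphabet Σ ∪ {#} with non-terminals S₀, S₁, …, S_N, start symbol S_N, and productions: S_k → d S_k d for every d ∈ Σ and 0 ≤ k ≤ N (matching); S_k → d₁ S_{k−1} d₂ for all d₁, d₂ ∈ Σ with d₁ ≠ d₂ and 1 ≤ k ≤ N (substitution); S_k → d S_{k−1} and S_k → S_{k−1} d for every d ∈ Σ and 1 ≤ k ≤ N (deletion and insertion); and S_k → # for 0 ≤ k ≤ N. The language generated by this grammar is exactly { x · # · reverse(y) : x, y ∈ Σ* and the edit distance between x and y is at most N }. -/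
/-- A cost function for `levenshtein` (as in the former `Mathlib.Data.List.EditDistance.Defs`). -/
structure Levenshtein.Cost (α β δ : Type*) where
  /-- Cost to delete an element from a list. -/
  delete : α → δ
  /-- Cost in insert an element into a list. -/
  insert : β → δ
  /-- Cost to substitute one element for another in a list. -/
  substitute : α → β → δ

/-- The default cost function: deletion, insertion and substitution cost 1, matching costs 0. -/
def Levenshtein.defaultCost {α : Type*} [DecidableEq α] : Levenshtein.Cost α α ℕ where
  delete _ := 1
  insert _ := 1
  substitute a b := if a = b then 0 else 1

/-- One step of the dynamic program computing the Levenshtein distances of suffixes. -/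
def Levenshtein.impl {α β δ : Type*} [AddZeroClass δ] [Min δ] (C : Levenshtein.Cost α β δ)
    (xs : List β) (x : α) (d : {r : List δ // 0 < r.length}) :
    {r : List δ // 0 < r.length} :=
  let ⟨ds, w⟩ := d
  xs.zip (ds.zip ds.tail) |>.foldr
    (init := ⟨[C.delete x + ds.getLast (List.length_pos_iff.mp w)], by simp⟩)
    (fun ⟨y, d₀, d₁⟩ ⟨r, w⟩ =>
      ⟨min (C.delete x + r[0]) (min (C.insert y + d₀) (C.substitute x y + d₁)) :: r, by simp⟩)

/-- The Levenshtein distances of all suffixes of `xs` to `ys`. -/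
def suffixLevenshtein {α β δ : Type*} [AddZeroClass δ] [Min δ] (C : Levenshtein.Cost α β δ)
    (xs : List α) (ys : List β) : {r : List δ // 0 < r.length} :=
  xs.foldr
    (fun x r => Levenshtein.impl C ys x r)
    (ys.foldr (fun y dists => ⟨(C.insert y + dists.1[0]'dists.2) :: dists.1, by simp⟩)
      ⟨[0], by simp⟩)

/-- The Levenshtein (edit) distance between `xs` and `ys` with cost function `C`. -/
def levenshtein {α β δ : Type*} [AddZeroClass δ] [Min δ] (C : Levenshtein.Cost α β δ)
    (xs : List α) (ys : List β) : δ :=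
  let ⟨r, w⟩ := suffixLevenshtein C xs ys
  r[0]

/-- The linear context-free grammar for edit distance at most `N`, over the terminal
alphabet `Σ ∪ {#}` (modelled as `Option α`, with `#` the fresh symbol `none`): its
nonterminals are `S₀, S₁, …, S_N` (modelled as `Fin (N+1)`), its start symbol is `S_N`,
and its productions are `S_k → d S_k d` for every `d ∈ Σ` (matching),
`S_k → d₁ S_{k−1} d₂` for all `d₁ ≠ d₂ ∈ Σ` (substitution), `S_k → d S_{k−1}` and
`S_k → S_{k−1} d` for every `d ∈ Σ` (deletion and insertion), and `S_k → #`. -/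
def editDistanceGrammar (α : Type) [Fintype α] [DecidableEq α] (N : ℕ) :
    ContextFreeGrammar (Option α) :=
  ⟨Fin (N + 1), Fin.last N,
    -- matching: S_k → d S_k d
    (Finset.univ.image fun p : α × Fin (N + 1) =>
      ⟨p.2, [Symbol.terminal (some p.1), Symbol.nonterminal p.2,
             Symbol.terminal (some p.1)]⟩)
    -- substitution: S_{k} → d₁ S_{k−1} d₂ for d₁ ≠ d₂
    ∪ ((Finset.univ.filter fun p : α × α × Fin N => p.1 ≠ p.2.1).image fun p =>
      ⟨p.2.2.succ, [Symbol.terminal (some p.1), Symbol.nonterminal p.2.2.castSucc,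
                    Symbol.terminal (some p.2.1)]⟩)
    -- deletion: S_k → d S_{k−1}
    ∪ (Finset.univ.image fun p : α × Fin N =>
      ⟨p.2.succ, [Symbol.terminal (some p.1), Symbol.nonterminal p.2.castSucc]⟩)
    -- insertion: S_k → S_{k−1} d
    ∪ (Finset.univ.image fun p : α × Fin N =>
      ⟨p.2.succ, [Symbol.nonterminal p.2.castSucc, Symbol.terminal (some p.1)]⟩)
    -- sentinel: S_k → #
    ∪ (Finset.univ.image fun k : Fin (N + 1) => ⟨k, [Symbol.terminal none]⟩)⟩

namespace Levenshtein

section Aux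

variable {α β δ : Type*} [AddZeroClass δ] [Min δ] (C : Levenshtein.Cost α β δ)

theorem getElem_zero_aux {l : List δ} {d : δ} {t : List δ} (h : l = d :: t)
    (hl : 0 < l.length) : l[0]'hl = d := by
  subst h; rfl

theorem lev_eq_aux (xs : List α) (ys : List β) :
    levenshtein C xs ys = (suffixLevenshtein C xs ys).1[0]'(suffixLevenshtein C xs ys).2 := rfl

theorem impl_nil_aux (x : α) (s : {r : List δ // 0 < r.length}) (d : δ) (h : s.1 = [d]) :
    (Levenshtein.impl C [] x s).1 = [C.delete x + d] := by
  obtain ⟨l, w⟩ := s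
  obtain rfl : l = [d] := h
  rfl

theorem suffix_nil_aux (xs : List α) :
    (suffixLevenshtein C xs ([] : List β)).1 = [levenshtein C xs ([] : List β)] := by
  induction xs with
  | nil => rfl
  | cons x xs ih =>
    have h := impl_nil_aux C x _ _ ih
    show (Levenshtein.impl C [] x (suffixLevenshtein C xs [])).1 =
      [(Levenshtein.impl C [] x (suffixLevenshtein C xs [])).1[0]'(Levenshtein.impl C [] x
        (suffixLevenshtein C xs [])).2]
    rw [getElem_zero_aux h]
    exact h

theorem impl_cons_head_aux (x : α) (y : β) (ys : List β) (s1 s2 : {r : List δ // 0 < r.length})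
    (d₀ d₁ : δ) (ds : List δ) (h1 : s1.1 = d₀ :: s2.1) (h2 : s2.1 = d₁ :: ds) :
    (Levenshtein.impl C (y :: ys) x s1).1[0]'(Levenshtein.impl C (y :: ys) x s1).2 =
      min (C.delete x + (Levenshtein.impl C ys x s2).1[0]'(Levenshtein.impl C ys x s2).2)
        (min (C.insert y + d₀) (C.substitute x y + d₁)) := by
  obtain ⟨l2, w2⟩ := s2
  obtain rfl : l2 = d₁ :: ds := h2
  obtain ⟨l1, w1⟩ := s1
  obtain rfl : l1 = d₀ :: d₁ :: ds := h1
  rfl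

theorem impl_cons_aux (y : β) (ys : List β) (x : α) (d₀ d₁ : δ) (ds : List δ)
    (w : 0 < (d₀ :: d₁ :: ds).length) :
    (Levenshtein.impl C (y :: ys) x ⟨d₀ :: d₁ :: ds, w⟩).1 =
      min (C.delete x + (Levenshtein.impl C ys x ⟨d₁ :: ds, by simp⟩).1[0]'(Levenshtein.impl C
        ys x ⟨d₁ :: ds, by simp⟩).2)
        (min (C.insert y + d₀) (C.substitute x y + d₁)) ::
        (Levenshtein.impl C ys x ⟨d₁ :: ds, by simp⟩).1 := rfl

theorem suffix_cons_aux (xs : List α) (y : β) (ys : List β) :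
    ∃ d, (suffixLevenshtein C xs (y :: ys)).1 = d :: (suffixLevenshtein C xs ys).1 := by
  induction xs with
  | nil => exact ⟨_, rfl⟩
  | cons x xs ih =>
    obtain ⟨d, hd⟩ := ih
    show ∃ e, (Levenshtein.impl C (y :: ys) x (suffixLevenshtein C xs (y :: ys))).1 =
      e :: (Levenshtein.impl C ys x (suffixLevenshtein C xs ys)).1
    generalize suffixLevenshtein C xs ys = s at hd ⊢
    obtain ⟨_ | ⟨d₁, ds⟩, hw⟩ := s
    · simp at hw
    · have h2 : suffixLevenshtein C xs (y :: ys) = ⟨d :: d₁ :: ds, by simp⟩ := Subtype.ext hd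
      rw [h2]
      exact ⟨_, impl_cons_aux C y ys x d d₁ ds _⟩

theorem suffix_cons_eq_aux (xs : List α) (y : β) (ys : List β) :
    (suffixLevenshtein C xs (y :: ys)).1 =
      levenshtein C xs (y :: ys) :: (suffixLevenshtein C xs ys).1 := by
  obtain ⟨d, hd⟩ := suffix_cons_aux C xs y ys
  rw [lev_eq_aux, getElem_zero_aux hd]
  exact hd

theorem suffix_head_aux (xs : List α) (ys : List β) :
    (suffixLevenshtein C xs ys).1 =
      levenshtein C xs ys :: (suffixLevenshtein C xs ys).1.tail := by
  rw [lev_eq_aux]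
  generalize suffixLevenshtein C xs ys = s
  obtain ⟨_ | ⟨d, t⟩, hw⟩ := s
  · simp at hw
  · rfl

theorem lev_cons_cons_aux (x : α) (xs : List α) (y : β) (ys : List β) :
    levenshtein C (x :: xs) (y :: ys) =
      min (C.delete x + levenshtein C (x :: xs) ys)
        (min (C.insert y + levenshtein C xs (y :: ys)) (C.substitute x y + levenshtein C xs ys)) := by
  have := impl_cons_head_aux C x y ys (suffixLevenshtein C xs (y :: ys))
    (suffixLevenshtein C xs ys) _ _ _ (suffix_cons_eq_aux C xs y ys) (suffix_head_aux C xs ys)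
  exact this

theorem levenshtein_nil_cons (y : β) (ys : List β) :
    levenshtein C ([] : List α) (y :: ys) = C.insert y + levenshtein C ([] : List α) ys := rfl

theorem levenshtein_cons_nil (x : α) (xs : List α) :
    levenshtein C (x :: xs) ([] : List β) = C.delete x + levenshtein C xs ([] : List β) :=
  getElem_zero_aux (impl_nil_aux C x _ _ (suffix_nil_aux C xs)) _

end Aux

@[simp] theorem defaultCost_delete {α : Type*} [DecidableEq α] (a : α) :
    (defaultCost : Cost α α ℕ).delete a = 1 := rfl

@[simp] theorem defaultCost_insert {α : Type*} [DecidableEq α] (a : α) :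
    (defaultCost : Cost α α ℕ).insert a = 1 := rfl

@[simp] theorem defaultCost_substitute {α : Type*} [DecidableEq α] (a b : α) :
    (defaultCost : Cost α α ℕ).substitute a b = if a = b then 0 else 1 := rfl

theorem levenshtein_cons_cons {α : Type*} [DecidableEq α] (x : α) (xs : List α) (y : α)
    (ys : List α) :
    levenshtein defaultCost (x :: xs) (y :: ys) =
      min ((defaultCost : Cost α α ℕ).delete x + levenshtein defaultCost xs (y :: ys))
        (min ((defaultCost : Cost α α ℕ).insert y + levenshtein defaultCost (x :: xs) ys)
          ((defaultCost : Cost α α ℕ).substitute x y + levenshtein defaultCost xs ys)) := by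
  rw [lev_cons_cons_aux]
  simp only [defaultCost_delete, defaultCost_insert]
  omega

end Levenshtein

namespace EditAux

open Symbol Levenshtein

variable {α : Type} [Fintype α] [DecidableEq α] {N : ℕ}

/-- Coerce a terminal word into a sentential form. -/
abbrev Ter (N : ℕ) (x : List (Option α)) : List (Symbol (Option α) (Fin (N + 1))) :=
  x.map Symbol.terminal

/-! ### Levenshtein inequalities -/

lemma lev_cons_cons_same_le (a : α) (x y : List α) :
    levenshtein defaultCost (a :: x) (a :: y) ≤ levenshtein defaultCost x y := by
  rw [levenshtein_cons_cons]
  refine le_trans (min_le_right _ _) (le_trans (min_le_right _ _) ?_)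
  simp [defaultCost]

lemma lev_cons_cons_le (a b : α) (x y : List α) :
    levenshtein defaultCost (a :: x) (b :: y) ≤ 1 + levenshtein defaultCost x y := by
  rw [levenshtein_cons_cons]
  refine le_trans (min_le_right _ _) (le_trans (min_le_right _ _) ?_)
  simp only [defaultCost]
  split <;> omega

lemma lev_cons_left_le (a : α) (x y : List α) :
    levenshtein defaultCost (a :: x) y ≤ 1 + levenshtein defaultCost x y := by
  cases y with
  | nil => rw [levenshtein_cons_nil]; simp [defaultCost]
  | cons b ys =>
    rw [levenshtein_cons_cons]
    exact le_trans (min_le_left _ _) (by simp [defaultCost])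

lemma lev_cons_right_le (a : α) (x y : List α) :
    levenshtein defaultCost x (a :: y) ≤ 1 + levenshtein defaultCost x y := by
  cases x with
  | nil => rw [levenshtein_nil_cons]; simp [defaultCost]
  | cons b xs =>
    rw [levenshtein_cons_cons]
    exact le_trans (min_le_right _ _) (le_trans (min_le_left _ _) (by simp [defaultCost]))

/-! ### Rule membership -/

lemma rules_inv {r : ContextFreeRule (Option α) (Fin (N + 1))}
    (h : r ∈ (editDistanceGrammar α N).rules) :
    (∃ d k, r = ⟨k, [terminal (some d), nonterminal k, terminal (some d)]⟩) ∨
    (∃ d₁ d₂, ∃ j : Fin N, d₁ ≠ d₂ ∧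
      r = ⟨j.succ, [terminal (some d₁), nonterminal j.castSucc, terminal (some d₂)]⟩) ∨
    (∃ d, ∃ j : Fin N, r = ⟨j.succ, [terminal (some d), nonterminal j.castSucc]⟩) ∨
    (∃ d, ∃ j : Fin N, r = ⟨j.succ, [nonterminal j.castSucc, terminal (some d)]⟩) ∨
    (∃ k, r = ⟨k, [terminal none]⟩) := by
  unfold editDistanceGrammar at h
  simp only [editDistanceGrammar, Finset.mem_union, Finset.mem_image, Finset.mem_filter,
    Finset.mem_univ, true_and] at h
  rcases h with ((((⟨p, hp⟩ | ⟨p, hne, hp⟩) | ⟨p, hp⟩) | ⟨p, hp⟩) | ⟨k, hk⟩)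
  · exact Or.inl ⟨p.1, p.2, hp.symm⟩
  · exact Or.inr (Or.inl ⟨p.1, p.2.1, p.2.2, hne, hp.symm⟩)
  · exact Or.inr (Or.inr (Or.inl ⟨p.1, p.2, hp.symm⟩))
  · exact Or.inr (Or.inr (Or.inr (Or.inl ⟨p.1, p.2, hp.symm⟩)))
  · exact Or.inr (Or.inr (Or.inr (Or.inr ⟨k, hk.symm⟩)))

lemma mem_match (d : α) (k : Fin (N + 1)) :
    (⟨k, [terminal (some d), nonterminal k, terminal (some d)]⟩ :
      ContextFreeRule (Option α) (Fin (N + 1))) ∈ (editDistanceGrammar α N).rules := by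
  unfold editDistanceGrammar
  simp only [editDistanceGrammar, Finset.mem_union, Finset.mem_image, Finset.mem_univ, true_and]
  exact Or.inl (Or.inl (Or.inl (Or.inl ⟨(d, k), rfl⟩)))

lemma mem_subst {d₁ d₂ : α} (hne : d₁ ≠ d₂) (j : Fin N) :
    (⟨j.succ, [terminal (some d₁), nonterminal j.castSucc, terminal (some d₂)]⟩ :
      ContextFreeRule (Option α) (Fin (N + 1))) ∈ (editDistanceGrammar α N).rules := by
  unfold editDistanceGrammar
  simp only [editDistanceGrammar, Finset.mem_union, Finset.mem_image, Finset.mem_filter,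
    Finset.mem_univ, true_and]
  exact Or.inl (Or.inl (Or.inl (Or.inr ⟨(d₁, d₂, j), hne, rfl⟩)))

lemma mem_del (d : α) (j : Fin N) :
    (⟨j.succ, [terminal (some d), nonterminal j.castSucc]⟩ :
      ContextFreeRule (Option α) (Fin (N + 1))) ∈ (editDistanceGrammar α N).rules := by
  unfold editDistanceGrammar
  simp only [editDistanceGrammar, Finset.mem_union, Finset.mem_image, Finset.mem_univ, true_and]
  exact Or.inl (Or.inl (Or.inr ⟨(d, j), rfl⟩))

lemma mem_ins (d : α) (j : Fin N) :
    (⟨j.succ, [nonterminal j.castSucc, terminal (some d)]⟩ :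
      ContextFreeRule (Option α) (Fin (N + 1))) ∈ (editDistanceGrammar α N).rules := by
  unfold editDistanceGrammar
  simp only [editDistanceGrammar, Finset.mem_union, Finset.mem_image, Finset.mem_univ, true_and]
  exact Or.inl (Or.inr ⟨(d, j), rfl⟩)

lemma mem_sent (k : Fin (N + 1)) :
    (⟨k, [terminal none]⟩ :
      ContextFreeRule (Option α) (Fin (N + 1))) ∈ (editDistanceGrammar α N).rules := by
  unfold editDistanceGrammar
  simp only [editDistanceGrammar, Finset.mem_union, Finset.mem_image, Finset.mem_univ, true_and]
  exact Or.inr ⟨k, rfl⟩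

/-! ### Structural lemmas -/

lemma no_nt {y : List (Option α)} {p q : List (Symbol (Option α) (Fin (N + 1)))}
    {i : Fin (N + 1)} (h : Ter N y = p ++ Symbol.nonterminal i :: q) : False := by
  have : Symbol.nonterminal i ∈ Ter N y := by rw [h]; simp
  simp only [Ter, List.mem_map] at this
  obtain ⟨t, -, ht⟩ := this
  exact nomatch ht

lemma split_eq {x : List (Option α)} {k i : Fin (N + 1)} :
    ∀ {p : List (Symbol (Option α) (Fin (N + 1)))} {q y},
    Ter N x ++ Symbol.nonterminal k :: Ter N y = p ++ Symbol.nonterminal i :: q →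
    p = Ter N x ∧ i = k ∧ q = Ter N y := by
  induction x with
  | nil =>
    intro p q y h
    cases p with
    | nil =>
      simp only [Ter, List.map_nil, List.nil_append] at h
      injection h with h1 h2
      exact ⟨rfl, (Symbol.nonterminal.inj h1).symm, h2.symm⟩
    | cons s p' =>
      simp only [Ter, List.map_nil, List.nil_append, List.cons_append, List.cons.injEq] at h
      exact absurd h.2 (fun hh => no_nt hh)
  | cons a x ih =>
    intro p q y h
    cases p with
    | nil =>
      simp only [Ter, List.map_cons, List.cons_append, List.nil_append, List.cons.injEq] at h
      exact nomatch h.1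
    | cons s p' =>
      simp only [Ter, List.map_cons, List.cons_append, List.cons.injEq] at h
      obtain ⟨hp, hi, hq⟩ := ih h.2
      exact ⟨by simp [Ter, ← h.1, hp], hi, hq⟩

lemma derives_terminal_eq {y : List (Option α)} {w : List (Symbol (Option α) (Fin (N + 1)))}
    (h : (editDistanceGrammar α N).Derives (Ter N y) w) : w = Ter N y := by
  rcases h.eq_or_head with heq | ⟨u, ⟨r, _, hr⟩, _⟩
  · exact heq.symm
  · obtain ⟨p, q, hpq, -⟩ := hr.exists_parts
    exact absurd (by simp at hpq; exact hpq) (fun hh => no_nt hh)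

/-! ### Soundness -/

lemma sound {v w : List (Symbol (Option α) (Fin (N + 1)))}
    (h : (editDistanceGrammar α N).Derives v w)
    (hw : ∀ s ∈ w, ∃ t, s = Symbol.terminal t) :
    ∀ (x y : List (Option α)) (k : Fin (N + 1)),
      v = Ter N x ++ Symbol.nonterminal k :: Ter N y →
      ∃ a b : List α, levenshtein defaultCost a b ≤ (k : ℕ) ∧
        w = Ter N (x ++ a.map some ++ none :: (b.map some).reverse ++ y) := by
  induction h using Relation.ReflTransGen.head_induction_on with
  | refl =>
    intro x y k hv
    exfalso
    have hmem : Symbol.nonterminal k ∈ w := by rw [hv]; simp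
    obtain ⟨t, ht⟩ := hw _ hmem
    exact nomatch ht
  | head hstep htail ih =>
    intro x y k hv
    obtain ⟨r, hrmem, hr⟩ := hstep
    obtain ⟨p, q, hu, hc⟩ := hr.exists_parts
    rw [hv] at hu
    obtain ⟨hp, hik, hq⟩ := split_eq (by simp at hu; exact hu)
    subst hp hq
    rcases rules_inv hrmem with ⟨d, k', hr'⟩ | ⟨d₁, d₂, j, hne, hr'⟩ | ⟨d, j, hr'⟩ |
      ⟨d, j, hr'⟩ | ⟨k', hr'⟩
    all_goals subst hr'; simp only at hik; subst hik
    · -- matching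
      obtain ⟨a, b, hab, hw⟩ := ih (x ++ [some d]) (some d :: y) k'
        (by rw [hc]; simp [Ter]; exact List.append_assoc _ _ _)
      refine ⟨d :: a, d :: b, le_trans (lev_cons_cons_same_le d a b) hab, ?_⟩
      rw [hw]; simp [Ter]
    · -- substitution
      obtain ⟨a, b, hab, hw⟩ := ih (x ++ [some d₁]) (some d₂ :: y) j.castSucc
        (by rw [hc]; simp [Ter]; exact List.append_assoc _ _ _)
      refine ⟨d₁ :: a, d₂ :: b, ?_, ?_⟩
      · refine le_trans (lev_cons_cons_le d₁ d₂ a b) ?_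
        simp only [Fin.coe_castSucc] at hab
        simp only [Fin.val_succ]
        omega
      · rw [hw]; simp [Ter]
    · -- deletion
      obtain ⟨a, b, hab, hw⟩ := ih (x ++ [some d]) y j.castSucc
        (by rw [hc]; simp [Ter]; exact List.append_assoc _ _ _)
      refine ⟨d :: a, b, ?_, ?_⟩
      · refine le_trans (lev_cons_left_le d a b) ?_
        simp only [Fin.coe_castSucc] at hab
        simp only [Fin.val_succ]
        omega
      · rw [hw]; simp [Ter]
    · -- insertion
      obtain ⟨a, b, hab, hw⟩ := ih x (some d :: y) j.castSucc
        (by rw [hc]; simp [Ter]; exact List.append_assoc _ _ _)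
      refine ⟨a, d :: b, ?_, ?_⟩
      · refine le_trans (lev_cons_right_le d a b) ?_
        simp only [Fin.coe_castSucc] at hab
        simp only [Fin.val_succ]
        omega
      · rw [hw]; simp [Ter]
    · -- sentinel
      have hcw : w = Ter N (x ++ none :: y) := by
        refine derives_terminal_eq ?_
        rw [hc] at htail
        have e : Ter N x ++ [terminal none] ++ Ter N y = Ter N (x ++ none :: y) := by simp [Ter]
        rw [← e]
        exact htail
      exact ⟨[], [], Nat.zero_le _, by rw [hcw]; simp [Ter]⟩

/-! ### Completeness -/

lemma complete :
    ∀ (x y : List α) (k : ℕ) (hk : k ≤ N),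
      levenshtein defaultCost x y ≤ k →
      (editDistanceGrammar α N).Derives [Symbol.nonterminal (⟨k, Nat.lt_succ_of_le hk⟩ : Fin (N + 1))]
        (Ter N (x.map some ++ none :: (y.map some).reverse))
  | [], [], k, hk, _ => by
    have := ContextFreeRule.Rewrites.input_output
      (r := (⟨⟨k, Nat.lt_succ_of_le hk⟩, [terminal none]⟩ :
        ContextFreeRule (Option α) (Fin (N + 1))))
    exact Relation.ReflTransGen.single ⟨_, mem_sent _, this⟩
  | [], b :: y, k, hk, hlev => by
    rw [levenshtein_nil_cons] at hlev
    simp only [defaultCost_insert] at hlev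
    obtain ⟨k', rfl⟩ : ∃ k', k = k' + 1 := ⟨k - 1, by omega⟩
    have hk' : k' ≤ N := by omega
    have hkN : k' < N := by omega
    have ih := complete [] y k' hk' (by omega)
    have hins := mem_ins (N := N) b ⟨k', hkN⟩
    have step : (editDistanceGrammar α N).Produces
        [Symbol.nonterminal (⟨k' + 1, Nat.lt_succ_of_le hk⟩ : Fin (N + 1))]
        [Symbol.nonterminal (⟨k', Nat.lt_succ_of_le hk'⟩ : Fin (N + 1)),
          Symbol.terminal (some b)] := by
      refine ⟨_, hins, ?_⟩
      have := ContextFreeRule.Rewrites.input_output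
        (r := (⟨(⟨k', hkN⟩ : Fin N).succ,
          [nonterminal (⟨k', hkN⟩ : Fin N).castSucc, terminal (some b)]⟩ :
          ContextFreeRule (Option α) (Fin (N + 1))))
      convert this using 2 <;> simp [Fin.succ, Fin.castSucc, Fin.castAdd, Fin.castLE] <;> exact Iff.rfl
    refine step.trans_derives ?_
    have := ih.append_right [Symbol.terminal (some (b : α))]
    convert this using 1 <;> simp [Ter] <;> exact Iff.rfl
  | a :: x, [], k, hk, hlev => by
    rw [levenshtein_cons_nil] at hlev
    simp only [defaultCost_delete] at hlev
    obtain ⟨k', rfl⟩ : ∃ k', k = k' + 1 := ⟨k - 1, by omega⟩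
    have hk' : k' ≤ N := by omega
    have hkN : k' < N := by omega
    have ih := complete x [] k' hk' (by omega)
    have step : (editDistanceGrammar α N).Produces
        [Symbol.nonterminal (⟨k' + 1, Nat.lt_succ_of_le hk⟩ : Fin (N + 1))]
        [Symbol.terminal (some a),
          Symbol.nonterminal (⟨k', Nat.lt_succ_of_le hk'⟩ : Fin (N + 1))] := by
      refine ⟨_, mem_del (N := N) a ⟨k', hkN⟩, ?_⟩
      have := ContextFreeRule.Rewrites.input_output
        (r := (⟨(⟨k', hkN⟩ : Fin N).succ,
          [terminal (some a), nonterminal (⟨k', hkN⟩ : Fin N).castSucc]⟩ :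
          ContextFreeRule (Option α) (Fin (N + 1))))
      convert this using 2 <;> simp [Fin.succ, Fin.castSucc, Fin.castAdd, Fin.castLE] <;> exact Iff.rfl
    refine step.trans_derives ?_
    have := ih.append_left [Symbol.terminal (some (a : α))]
    convert this using 1 <;> simp [Ter] <;> exact Iff.rfl
  | a :: x, b :: y, k, hk, hlev => by
    rw [levenshtein_cons_cons, min_le_iff, min_le_iff] at hlev
    rcases hlev with hdel | hins | hsub
    · -- delete a
      simp only [defaultCost_delete] at hdel
      obtain ⟨k', rfl⟩ : ∃ k', k = k' + 1 := ⟨k - 1, by omega⟩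
      have hk' : k' ≤ N := by omega
      have hkN : k' < N := by omega
      have ih := complete x (b :: y) k' hk' (by omega)
      have step : (editDistanceGrammar α N).Produces
          [Symbol.nonterminal (⟨k' + 1, Nat.lt_succ_of_le hk⟩ : Fin (N + 1))]
          [Symbol.terminal (some a),
            Symbol.nonterminal (⟨k', Nat.lt_succ_of_le hk'⟩ : Fin (N + 1))] := by
        refine ⟨_, mem_del (N := N) a ⟨k', hkN⟩, ?_⟩
        have := ContextFreeRule.Rewrites.input_output
          (r := (⟨(⟨k', hkN⟩ : Fin N).succ,
            [terminal (some a), nonterminal (⟨k', hkN⟩ : Fin N).castSucc]⟩ :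
            ContextFreeRule (Option α) (Fin (N + 1))))
        convert this using 2 <;> simp [Fin.succ, Fin.castSucc, Fin.castAdd, Fin.castLE] <;> exact Iff.rfl
      refine step.trans_derives ?_
      have := ih.append_left [Symbol.terminal (some (a : α))]
      convert this using 1 <;> simp [Ter] <;> exact Iff.rfl
    · -- insert b
      simp only [defaultCost_insert] at hins
      obtain ⟨k', rfl⟩ : ∃ k', k = k' + 1 := ⟨k - 1, by omega⟩
      have hk' : k' ≤ N := by omega
      have hkN : k' < N := by omega
      have ih := complete (a :: x) y k' hk' (by omega)
      have step : (editDistanceGrammar α N).Produces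
          [Symbol.nonterminal (⟨k' + 1, Nat.lt_succ_of_le hk⟩ : Fin (N + 1))]
          [Symbol.nonterminal (⟨k', Nat.lt_succ_of_le hk'⟩ : Fin (N + 1)),
            Symbol.terminal (some b)] := by
        refine ⟨_, mem_ins (N := N) b ⟨k', hkN⟩, ?_⟩
        have := ContextFreeRule.Rewrites.input_output
          (r := (⟨(⟨k', hkN⟩ : Fin N).succ,
            [nonterminal (⟨k', hkN⟩ : Fin N).castSucc, terminal (some b)]⟩ :
            ContextFreeRule (Option α) (Fin (N + 1))))
        convert this using 2 <;> simp [Fin.succ, Fin.castSucc, Fin.castAdd, Fin.castLE] <;> exact Iff.rfl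
      refine step.trans_derives ?_
      have := ih.append_right [Symbol.terminal (some (b : α))]
      convert this using 1 <;> simp [Ter] <;> (unfold editDistanceGrammar; simp [List.append_assoc])
    · -- substitute / match
      by_cases hab : a = b
      · subst hab
        have hsub' : levenshtein defaultCost x y ≤ k := by simpa using hsub
        have ih := complete x y k hk hsub'
        have step : (editDistanceGrammar α N).Produces
            [Symbol.nonterminal (⟨k, Nat.lt_succ_of_le hk⟩ : Fin (N + 1))]
            [Symbol.terminal (some a),
              Symbol.nonterminal (⟨k, Nat.lt_succ_of_le hk⟩ : Fin (N + 1)),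
              Symbol.terminal (some a)] := by
          refine ⟨_, mem_match a ⟨k, Nat.lt_succ_of_le hk⟩, ?_⟩
          exact ContextFreeRule.Rewrites.input_output
        refine step.trans_derives ?_
        have := (ih.append_left [Symbol.terminal (some (a : α))]).append_right
          [Symbol.terminal (some (a : α))]
        convert this using 1 <;> simp [Ter] <;> (unfold editDistanceGrammar; simp [List.append_assoc])
      · simp only [defaultCost_substitute, if_neg hab] at hsub
        obtain ⟨k', rfl⟩ : ∃ k', k = k' + 1 := ⟨k - 1, by omega⟩
        have hk' : k' ≤ N := by omega
        have hkN : k' < N := by omega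
        have ih := complete x y k' hk' (by omega)
        have step : (editDistanceGrammar α N).Produces
            [Symbol.nonterminal (⟨k' + 1, Nat.lt_succ_of_le hk⟩ : Fin (N + 1))]
            [Symbol.terminal (some a),
              Symbol.nonterminal (⟨k', Nat.lt_succ_of_le hk'⟩ : Fin (N + 1)),
              Symbol.terminal (some b)] := by
          refine ⟨_, mem_subst hab ⟨k', hkN⟩, ?_⟩
          have := ContextFreeRule.Rewrites.input_output
            (r := (⟨(⟨k', hkN⟩ : Fin N).succ,
              [terminal (some a), nonterminal (⟨k', hkN⟩ : Fin N).castSucc,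
                terminal (some b)]⟩ :
              ContextFreeRule (Option α) (Fin (N + 1))))
          convert this using 2 <;> simp [Fin.succ, Fin.castSucc, Fin.castAdd, Fin.castLE] <;> exact Iff.rfl
        refine step.trans_derives ?_
        have := (ih.append_left [Symbol.terminal (some (a : α))]).append_right
          [Symbol.terminal (some (b : α))]
        convert this using 1 <;> simp [Ter] <;> (unfold editDistanceGrammar; simp [List.append_assoc])
  termination_by x y => x.length + y.length

end EditAux

/-- The language generated by the edit-distance grammar is exactly
`{ x · # · reverse(y) : x, y ∈ Σ*, editDistance x y ≤ N }`. -/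
theorem editDistanceGrammar_language (α : Type) [Fintype α] [DecidableEq α] (N : ℕ) :
    (editDistanceGrammar α N).language =
      { w : List (Option α) | ∃ x y : List α,
          levenshtein Levenshtein.defaultCost x y ≤ N ∧
          w = x.map some ++ none :: (y.map some).reverse } := by
  ext w
  rw [ContextFreeGrammar.mem_language_iff]
  constructor
  · intro h
    obtain ⟨a, b, hab, hw⟩ := EditAux.sound (w := List.map Symbol.terminal w) h (by simp) [] [] (Fin.last N)
      rfl
    refine ⟨a, b, by simpa using hab, ?_⟩
    have : List.map (Symbol.terminal (N := Fin (N + 1))) w =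
        List.map Symbol.terminal (a.map some ++ none :: (b.map some).reverse) := by
      simp [EditAux.Ter] at hw ⊢; exact hw
    exact List.map_injective_iff.mpr (fun _ _ => Symbol.terminal.inj) this
  · rintro ⟨x, y, hxy, rfl⟩
    have := EditAux.complete (N := N) x y N le_rfl hxy
    have hlast : (⟨N, Nat.lt_succ_of_le le_rfl⟩ : Fin (N + 1)) = Fin.last N := rfl
    rw [hlast] at this
    simp [EditAux.Ter] at this ⊢; exact this
end
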